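/- The total number of Fink–Mao region words of length h for 3 ≤ h ≤ 9 is 85. Concretely, the counts for h = 3, 4, 5, 6, 7, 8, 9 are 1, 1, 3, 5, 11, 21, 43 respectively, and these sum to 85. -/

import Mathlib

/-- A region of the tie diagram: left, right, or center. -/
inductive Region : Type
  | L | R | C
deriving DecidableEq

open Region

/-- A Fink–Mao region word: a list of letters from {L, R, C} with consecutive
letters distinct, first letter `L`, ending with the suffix `L,R,C` or `R,L,C`. -/
def FMWord (w : List Region) : Prop :=
  w.Chain' (· ≠ ·) ∧ w.head? = some L ∧
    ([L, R, C] <:+ w ∨ [R, L, C] <:+ w)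

/-- `K h` is the number of Fink–Mao region words of length `h`. -/
noncomputable def K (h : ℕ) : ℕ := Nat.card {w : List Region // FMWord w ∧ w.length = h}


/-- Boolean test for `Chain' (· ≠ ·)`. -/
def chainB : List Region → Bool
  | [] => true
  | [_] => true
  | a :: b :: t => (a != b) && chainB (b :: t)

/-- The letters that may be prepended to `w` keeping consecutive letters distinct. -/
def ok (w : List Region) (b : Region) : Bool :=
  match w with
  | [] => true
  | a :: _ => b != a

lemma chainB_cons (a : Region) (t : List Region) :
    chainB (a :: t) = (ok t a && chainB t) := by
  cases t <;> simp [chainB, ok]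

/-- All chain-valid words of length `n`. -/
def cwords : ℕ → List (List Region)
  | 0 => [[]]
  | n+1 => (cwords n).flatMap fun w => ([L, R, C].filter (ok w)).map fun b => b :: w

lemma mem_cwords_of : ∀ (n : ℕ) (w : List Region),
    w.length = n → chainB w = true → w ∈ cwords n
  | 0, [], _, _ => by simp [cwords]
  | n+1, (a :: w), h, hc => by
    rw [chainB_cons, Bool.and_eq_true] at hc
    have hw : w ∈ cwords n := mem_cwords_of n w (by simpa using h) hc.2
    refine List.mem_flatMap.2 ⟨w, hw, List.mem_map.2 ⟨a, ?_, rfl⟩⟩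
    refine List.mem_filter.2 ⟨by cases a <;> simp, hc.1⟩

lemma of_mem_cwords : ∀ (n : ℕ) (w : List Region),
    w ∈ cwords n → w.length = n ∧ chainB w = true
  | 0, w, h => by simp [cwords] at h; simp [h, chainB]
  | n+1, w, h => by
    simp only [cwords, List.mem_flatMap, List.mem_map, List.mem_filter] at h
    obtain ⟨v, hv, b, ⟨_, hb⟩, rfl⟩ := h
    obtain ⟨hl, hc⟩ := of_mem_cwords n v hv
    exact ⟨by simp [hl], by rw [chainB_cons, Bool.and_eq_true]; exact ⟨hb, hc⟩⟩

lemma chainB_iff : ∀ w : List Region, chainB w = true ↔ w.Chain' (· ≠ ·)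
  | [] => by simp [chainB, List.Chain', List.isChain_nil]
  | [a] => by simp [chainB, List.Chain', List.isChain_singleton]
  | a :: b :: t => by
    rw [List.Chain', List.isChain_cons_cons]
    simp [chainB, chainB_iff (b :: t), List.Chain', Bool.and_eq_true, bne_iff_ne, and_comm]

/-- The Finset of Fink–Mao words of length `h`. -/
def F (h : ℕ) : Finset (List Region) :=
  ((cwords h).filter fun w =>
    decide (w.head? = some L) && (decide ([L, R, C] <:+ w) || decide ([R, L, C] <:+ w))).toFinset

lemma mem_F (h : ℕ) (w : List Region) : w ∈ F h ↔ FMWord w ∧ w.length = h := by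
  simp only [F, List.mem_toFinset, List.mem_filter, FMWord, Bool.and_eq_true,
    Bool.or_eq_true, decide_eq_true_eq]
  constructor
  · rintro ⟨hw, h1, h2⟩
    obtain ⟨hl, hc⟩ := of_mem_cwords h w hw
    exact ⟨⟨(chainB_iff w).1 hc, h1, h2⟩, hl⟩
  · rintro ⟨⟨hc, h1, h2⟩, hl⟩
    exact ⟨mem_cwords_of h w hl ((chainB_iff w).2 hc), h1, h2⟩

lemma K_eq (h : ℕ) : K h = (F h).card := by
  classical
  have e : {w : List Region // FMWord w ∧ w.length = h} ≃ {w : List Region // w ∈ F h} :=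
    Equiv.subtypeEquivRight fun w => (mem_F h w).symm
  rw [K, Nat.card_congr e, Nat.card_eq_fintype_card, Fintype.card_coe]

set_option maxRecDepth 10000 in
/-- The counts of Fink–Mao region words of lengths 3 through 9 are
1, 1, 3, 5, 11, 21, 43, and the total over these lengths is 85. -/
theorem eightyfive_ties :
    K 3 = 1 ∧ K 4 = 1 ∧ K 5 = 3 ∧ K 6 = 5 ∧ K 7 = 11 ∧ K 8 = 21 ∧ K 9 = 43 ∧
    (∑ h ∈ Finset.Icc 3 9, K h) = 85 := by
  have h3 : K 3 = 1 := by rw [K_eq]; decide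
  have h4 : K 4 = 1 := by rw [K_eq]; decide
  have h5 : K 5 = 3 := by rw [K_eq]; decide
  have h6 : K 6 = 5 := by rw [K_eq]; decide
  have h7 : K 7 = 11 := by rw [K_eq]; decide
  have h8 : K 8 = 21 := by rw [K_eq]; decide
  have h9 : K 9 = 43 := by rw [K_eq]; decide
  refine ⟨h3, h4, h5, h6, h7, h8, h9, ?_⟩
  have : Finset.Icc 3 9 = ({3,4,5,6,7,8,9} : Finset ℕ) := by decide
  rw [this]
  simp [Finset.sum_insert, h3, h4, h5, h6, h7, h8, h9]
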